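/- Let A₁,...,A_N be 2×2 complex matrices without a common eigenvector, whose joint spectral radius equals 1. Then sup over n ≥ 1 of max over i₁,...,i_n ∈ {1,...,N} of ‖A_{i_n}···A_{i_1}‖ is at most κ⁻¹ · max_j ‖A_j‖, where κ := min_{‖u‖=‖v‖=1} max_{X ∈ {I,A₁,...,A_N}} |⟨Xu,v⟩| > 0. -/

import Mathlib

noncomputable def opNormC (A : Matrix (Fin 2) (Fin 2) ℂ) : ℝ :=
  ‖LinearMap.toContinuousLinearMap (Matrix.toEuclideanLin A)‖

/-- The maximum over X ∈ {I, A₁, …, A_N} of |⟨Xu, v⟩|. -/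
noncomputable def maxInner {N : ℕ} (A : Fin N → Matrix (Fin 2) (Fin 2) ℂ)
    (u v : EuclideanSpace ℂ (Fin 2)) : ℝ :=
  ⨆ i : Option (Fin N), ‖(inner ℂ (Matrix.toEuclideanLin (i.elim 1 A) u) v : ℂ)‖

/-- κ := min over unit vectors u, v of maxInner A u v. -/
noncomputable def kappa {N : ℕ} (A : Fin N → Matrix (Fin 2) (Fin 2) ℂ) : ℝ :=
  sInf {r : ℝ | ∃ u v : EuclideanSpace ℂ (Fin 2), ‖u‖ = 1 ∧ ‖v‖ = 1 ∧ r = maxInner A u v}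

/-- A₁, …, A_N have a common eigenvector. -/
def HasCommonEigenvector {N : ℕ} (A : Fin N → Matrix (Fin 2) (Fin 2) ℂ) : Prop :=
  ∃ w : Fin 2 → ℂ, w ≠ 0 ∧ ∀ j, ∃ c : ℂ, (A j).mulVec w = c • w

/-- Product A_{σ(n)} ⋯ A_{σ(1)}. -/
noncomputable def prodW {N : ℕ} (A : Fin N → Matrix (Fin 2) (Fin 2) ℂ) (σ : ℕ → Fin N) :
    ℕ → Matrix (Fin 2) (Fin 2) ℂ
  | 0 => 1
  | n + 1 => A (σ (n + 1)) * prodW A σ n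

/-- max over words of length n of ‖A_{i_n} ⋯ A_{i_1}‖. -/
noncomputable def wordSup {N : ℕ} (A : Fin N → Matrix (Fin 2) (Fin 2) ℂ) (n : ℕ) : ℝ :=
  ⨆ σ : ℕ → Fin N, opNormC (prodW A σ n)

/-! ### Auxiliary material -/

open Matrix

local notation "E2" => EuclideanSpace ℂ (Fin 2)

/-- The continuous linear map associated to a matrix. -/
noncomputable def Tcl (A : Matrix (Fin 2) (Fin 2) ℂ) : E2 →L[ℂ] E2 :=
  LinearMap.toContinuousLinearMap (Matrix.toEuclideanLin A)

lemma opNormC_eq (A : Matrix (Fin 2) (Fin 2) ℂ) : opNormC A = ‖Tcl A‖ := rfl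

lemma Tcl_mul (A B : Matrix (Fin 2) (Fin 2) ℂ) : Tcl (A * B) = (Tcl A).comp (Tcl B) := by
  ext x i
  simp [Tcl, Matrix.toEuclideanLin_apply, Matrix.mulVec_mulVec]

lemma Tcl_one : Tcl 1 = ContinuousLinearMap.id ℂ E2 := by
  ext x i
  simp [Tcl, Matrix.toEuclideanLin_apply]

lemma opNormC_nonneg (A : Matrix (Fin 2) (Fin 2) ℂ) : 0 ≤ opNormC A := norm_nonneg _

lemma opNormC_one : opNormC (1 : Matrix (Fin 2) (Fin 2) ℂ) = 1 := by
  rw [opNormC_eq, Tcl_one]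
  exact ContinuousLinearMap.norm_id

lemma opNormC_mul_le (A B : Matrix (Fin 2) (Fin 2) ℂ) :
    opNormC (A * B) ≤ opNormC A * opNormC B := by
  rw [opNormC_eq, opNormC_eq, opNormC_eq, Tcl_mul]
  exact ContinuousLinearMap.opNorm_comp_le _ _

lemma exists_unit_norm : ∃ x : E2, ‖x‖ = 1 :=
  ⟨EuclideanSpace.single 0 1, by simp⟩

lemma exists_max_vec (T : E2 →L[ℂ] E2) : ∃ x : E2, ‖x‖ = 1 ∧ ‖T x‖ = ‖T‖ := by
  have hsc : IsCompact (Metric.sphere (0 : E2) 1) := isCompact_sphere _ _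
  obtain ⟨x0, hx0⟩ := exists_unit_norm
  have hne : (Metric.sphere (0 : E2) 1).Nonempty := ⟨x0, by simpa using hx0⟩
  obtain ⟨x, hx, hmax⟩ := hsc.exists_isMaxOn hne (T.continuous.norm.continuousOn)
  have hx1 : ‖x‖ = 1 := by simpa using hx
  refine ⟨x, hx1, le_antisymm ?_ ?_⟩
  · calc ‖T x‖ ≤ ‖T‖ * ‖x‖ := T.le_opNorm x
      _ = ‖T‖ := by rw [hx1, mul_one]
  · refine T.opNorm_le_bound (by positivity) fun y => ?_
    rcases eq_or_ne y 0 with rfl | hy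
    · simp
    · have hyn : ‖y‖ ≠ 0 := norm_ne_zero_iff.mpr hy
      have hmem : ((‖y‖)⁻¹ : ℂ) • y ∈ Metric.sphere (0 : E2) 1 := by
        simp [norm_smul, hyn]
      have h2 : ‖T (((‖y‖)⁻¹ : ℂ) • y)‖ ≤ ‖T x‖ := hmax hmem
      have h3 : ‖T (((‖y‖)⁻¹ : ℂ) • y)‖ = ‖y‖⁻¹ * ‖T y‖ := by
        rw [_root_.map_smul, norm_smul]; simp
      rw [h3] at h2
      calc ‖T y‖ = ‖y‖ * (‖y‖⁻¹ * ‖T y‖) := by field_simp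
        _ ≤ ‖y‖ * ‖T x‖ := mul_le_mul_of_nonneg_left h2 (norm_nonneg y)
        _ = ‖T x‖ * ‖y‖ := mul_comm _ _

section Kappa
variable {N : ℕ} (A : Fin N → Matrix (Fin 2) (Fin 2) ℂ)

lemma le_maxInner (u v : E2) (i : Option (Fin N)) :
    ‖(inner ℂ (Matrix.toEuclideanLin (i.elim 1 A) u) v : ℂ)‖ ≤ maxInner A u v :=
  le_ciSup (f := fun i : Option (Fin N) =>
    ‖(inner ℂ (Matrix.toEuclideanLin (i.elim 1 A) u) v : ℂ)‖)
    (Set.Finite.bddAbove (Set.finite_range _)) i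

lemma maxInner_nonneg (u v : E2) : 0 ≤ maxInner A u v :=
  le_trans (norm_nonneg _) (le_maxInner A u v none)

lemma maxInner_continuous :
    Continuous (fun p : E2 × E2 => maxInner A p.1 p.2) := by
  have hrw : ∀ p : E2 × E2, maxInner A p.1 p.2 =
      Finset.univ.sup' Finset.univ_nonempty
        (fun i : Option (Fin N) =>
          ‖(inner ℂ (Matrix.toEuclideanLin (i.elim 1 A) p.1) p.2 : ℂ)‖) := by
    intro p
    rw [Finset.sup'_univ_eq_ciSup]
    rfl
  simp only [hrw]
  rw [continuous_iff_continuousAt]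
  intro p
  exact Filter.Tendsto.finset_sup'_nhds_apply _ (fun i _ => by
    have hc : Continuous (fun q : E2 × E2 =>
        ‖(inner ℂ (Matrix.toEuclideanLin (i.elim 1 A) q.1) q.2 : ℂ)‖) := by
      have hT : Continuous (fun q : E2 × E2 => Matrix.toEuclideanLin (i.elim 1 A) q.1) :=
        (LinearMap.toContinuousLinearMap (Matrix.toEuclideanLin (i.elim 1 A))).continuous.comp
          continuous_fst
      exact (hT.inner continuous_snd).norm
    exact hc.continuousAt)

lemma kappa_mem :
    ∃ u v : E2, ‖u‖ = 1 ∧ ‖v‖ = 1 ∧ kappa A = maxInner A u v := by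
  have hS : {r : ℝ | ∃ u v : E2, ‖u‖ = 1 ∧ ‖v‖ = 1 ∧ r = maxInner A u v} =
      (fun p : E2 × E2 => maxInner A p.1 p.2) ''
        (Metric.sphere 0 1 ×ˢ Metric.sphere 0 1) := by
    ext r
    constructor
    · rintro ⟨u, v, hu, hv, rfl⟩
      exact ⟨(u, v), ⟨by simpa using hu, by simpa using hv⟩, rfl⟩
    · rintro ⟨⟨u, v⟩, ⟨hu, hv⟩, rfl⟩
      exact ⟨u, v, by simpa using hu, by simpa using hv, rfl⟩
  have hcpt : IsCompact ((fun p : E2 × E2 => maxInner A p.1 p.2) ''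
      (Metric.sphere 0 1 ×ˢ Metric.sphere 0 1)) :=
    ((isCompact_sphere _ _).prod (isCompact_sphere _ _)).image (maxInner_continuous A)
  have hne : ((fun p : E2 × E2 => maxInner A p.1 p.2) ''
      (Metric.sphere 0 1 ×ˢ Metric.sphere 0 1)).Nonempty := by
    refine ⟨maxInner A (EuclideanSpace.single 0 1) (EuclideanSpace.single 0 1),
      ⟨(EuclideanSpace.single 0 1, EuclideanSpace.single 0 1), ⟨?_, ?_⟩, rfl⟩⟩ <;> simp
  have hmem := hcpt.sInf_mem hne
  rw [kappa, hS]
  obtain ⟨⟨u, v⟩, ⟨hu, hv⟩, heq⟩ := hmem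
  exact ⟨u, v, by simpa using hu, by simpa using hv, heq.symm⟩

lemma kappa_le (u v : E2) (hu : ‖u‖ = 1) (hv : ‖v‖ = 1) : kappa A ≤ maxInner A u v := by
  apply csInf_le
  · exact ⟨0, fun r ⟨u', v', _, _, hr⟩ => hr ▸ maxInner_nonneg A u' v'⟩
  · exact ⟨u, v, hu, hv, rfl⟩

lemma kappa_pos (h : ¬ HasCommonEigenvector A) : 0 < kappa A := by
  obtain ⟨u, v, hu, hv, heq⟩ := kappa_mem A
  rw [heq]
  rcases lt_or_eq_of_le (maxInner_nonneg A u v) with hlt | heq0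
  · exact hlt
  exfalso
  have hzero : ∀ i : Option (Fin N),
      (inner ℂ (Matrix.toEuclideanLin (i.elim 1 A) u) v : ℂ) = 0 := by
    intro i
    have h1 := le_maxInner A u v i
    rw [← heq0] at h1
    have h0 := norm_nonneg ((inner ℂ (Matrix.toEuclideanLin (i.elim 1 A) u) v : ℂ))
    have : ‖(inner ℂ (Matrix.toEuclideanLin (i.elim 1 A) u) v : ℂ)‖ = 0 := le_antisymm h1 h0
    exact norm_eq_zero.mp this
  set K : Submodule ℂ E2 := (ℂ ∙ v)ᗮ with hK
  have hvne : v ≠ 0 := by intro h0; rw [h0] at hv; simp at hv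
  have hune : u ≠ 0 := by intro h0; rw [h0] at hu; simp at hu
  have hfr2 : Module.finrank ℂ E2 = 2 := by simp
  have hfrv : Module.finrank ℂ (ℂ ∙ v : Submodule ℂ E2) = 1 := finrank_span_singleton hvne
  have hfrK : Module.finrank ℂ K = 1 := by
    have h2 := Submodule.finrank_add_finrank_orthogonal (K := (ℂ ∙ v : Submodule ℂ E2))
    rw [hfrv, hfr2, ← hK] at h2
    omega
  have hmemK : ∀ i : Option (Fin N), Matrix.toEuclideanLin (i.elim 1 A) u ∈ K := by
    intro i
    rw [hK, Submodule.mem_orthogonal_singleton_iff_inner_right]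
    have hz := hzero i
    rw [← inner_conj_symm, hz]
    simp
  have htoE1 : Matrix.toEuclideanLin (1 : Matrix (Fin 2) (Fin 2) ℂ) u = u := by
    apply (WithLp.equiv 2 (Fin 2 → ℂ)).injective
    simp
  have huK : u ∈ K := by
    have := hmemK none
    simpa [htoE1] using this
  have hspan : (ℂ ∙ u : Submodule ℂ E2) = K := by
    apply Submodule.eq_of_le_of_finrank_eq
    · rw [Submodule.span_singleton_le_iff_mem]; exact huK
    · rw [hfrK, finrank_span_singleton hune]
  apply h
  refine ⟨WithLp.equiv 2 (Fin 2 → ℂ) u, ?_, ?_⟩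
  · simpa using hune
  · intro j
    have hmem : Matrix.toEuclideanLin (A j) u ∈ (ℂ ∙ u : Submodule ℂ E2) := by
      rw [hspan]; exact hmemK (some j)
    obtain ⟨c, hc⟩ := Submodule.mem_span_singleton.mp hmem
    refine ⟨c, ?_⟩
    have := congrArg (WithLp.equiv 2 (Fin 2 → ℂ)) hc
    change _ = (A j) *ᵥ WithLp.equiv 2 _ u at this
    rw [← this]; simp

end Kappa

/-! ### Word products -/

section Words
variable {N : ℕ} (A : Fin N → Matrix (Fin 2) (Fin 2) ℂ)

/-- `P` is a product of `n` letters from the alphabet. -/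
def IsProd (n : ℕ) (P : Matrix (Fin 2) (Fin 2) ℂ) : Prop :=
  ∃ σ : ℕ → Fin N, P = prodW A σ n

lemma prodW_congr (σ σ' : ℕ → Fin N) (n : ℕ) (h : ∀ t, 1 ≤ t → t ≤ n → σ t = σ' t) :
    prodW A σ n = prodW A σ' n := by
  induction n with
  | zero => rfl
  | succ n ih =>
    rw [prodW, prodW, h (n + 1) (by omega) (by omega),
      ih (fun t h1 h2 => h t h1 (by omega))]

lemma prodW_add (σ : ℕ → Fin N) (m n : ℕ) :
    prodW A σ (m + n) = prodW A (fun t => σ (t + m)) n * prodW A σ m := by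
  induction n with
  | zero => rw [prodW]; simp
  | succ n ih =>
    have : m + (n + 1) = (m + n) + 1 := by omega
    rw [this, prodW, ih, prodW]
    have : n + 1 + m = m + n + 1 := by omega
    rw [this, mul_assoc]

lemma isProd_mul {m n : ℕ} {P Q : Matrix (Fin 2) (Fin 2) ℂ}
    (hP : IsProd A m P) (hQ : IsProd A n Q) : IsProd A (m + n) (Q * P) := by
  obtain ⟨σ₁, rfl⟩ := hP
  obtain ⟨σ₂, rfl⟩ := hQ
  refine ⟨fun t => if t ≤ m then σ₁ t else σ₂ (t - m), ?_⟩
  rw [prodW_add]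
  congr 1
  · apply prodW_congr
    intro t h1 h2
    have : ¬ (t + m ≤ m) := by omega
    simp only [this, if_false]
    congr 1
    omega
  · apply prodW_congr
    intro t h1 h2
    simp [h2]

lemma isProd_one (hN : 0 < N) : IsProd A 0 (1 : Matrix (Fin 2) (Fin 2) ℂ) := by
  have : Nonempty (Fin N) := Fin.pos_iff_nonempty.mp hN
  exact ⟨fun _ => Classical.arbitrary _, rfl⟩

lemma isProd_cons {m : ℕ} {P : Matrix (Fin 2) (Fin 2) ℂ} (j : Fin N)
    (hP : IsProd A m P) : IsProd A (m + 1) (A j * P) := by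
  obtain ⟨σ, rfl⟩ := hP
  refine ⟨fun t => if t = m + 1 then j else σ t, ?_⟩
  rw [prodW]
  simp only [if_pos rfl]
  congr 1
  apply prodW_congr
  intro t h1 h2
  have : ¬ (t = m + 1) := by omega
  simp [this]

lemma le_opNormSup (j : Fin N) : opNormC (A j) ≤ ⨆ j, opNormC (A j) :=
  le_ciSup (f := fun j => opNormC (A j)) (Set.Finite.bddAbove (Set.finite_range _)) j

lemma opNormSup_nonneg (hN : 0 < N) : 0 ≤ ⨆ j, opNormC (A j) := by
  have : Nonempty (Fin N) := Fin.pos_iff_nonempty.mp hN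
  exact le_trans (opNormC_nonneg _) (le_opNormSup A (Classical.arbitrary _))

lemma prodW_norm_le (hN : 0 < N) (σ : ℕ → Fin N) (n : ℕ) :
    opNormC (prodW A σ n) ≤ (⨆ j, opNormC (A j)) ^ n := by
  induction n with
  | zero => rw [prodW, pow_zero, opNormC_one]
  | succ n ih =>
    rw [prodW, pow_succ]
    calc opNormC (A (σ (n + 1)) * prodW A σ n)
        ≤ opNormC (A (σ (n + 1))) * opNormC (prodW A σ n) := opNormC_mul_le _ _
      _ ≤ (⨆ j, opNormC (A j)) * (⨆ j, opNormC (A j)) ^ n :=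
          mul_le_mul (le_opNormSup A _) ih (opNormC_nonneg _) (opNormSup_nonneg A hN)
      _ = (⨆ j, opNormC (A j)) ^ n * (⨆ j, opNormC (A j)) := mul_comm _ _

lemma le_wordSup (hN : 0 < N) {n : ℕ} {P : Matrix (Fin 2) (Fin 2) ℂ} (hP : IsProd A n P) :
    opNormC P ≤ wordSup A n := by
  obtain ⟨σ, rfl⟩ := hP
  exact le_ciSup (f := fun σ : ℕ → Fin N => opNormC (prodW A σ n))
    ⟨(⨆ j, opNormC (A j)) ^ n, fun r ⟨σ', hσ'⟩ => hσ' ▸ prodW_norm_le A hN σ' n⟩ σ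

lemma wordSup_le_pow (hN : 0 < N) (n : ℕ) : wordSup A n ≤ (⨆ j, opNormC (A j)) ^ n := by
  have : Nonempty (Fin N) := Fin.pos_iff_nonempty.mp hN
  apply ciSup_le
  intro σ
  exact prodW_norm_le A hN σ n

lemma wordSup_nonneg (hN : 0 < N) (n : ℕ) : 0 ≤ wordSup A n := by
  have : Nonempty (Fin N) := Fin.pos_iff_nonempty.mp hN
  exact le_trans (opNormC_nonneg _)
    (le_wordSup A hN (P := prodW A (Classical.arbitrary _) n) ⟨Classical.arbitrary _, rfl⟩)

end Words


lemma combine {N : ℕ} (A : Fin N → Matrix (Fin 2) (Fin 2) ℂ) (hκ : 0 < kappa A)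
    {m n : ℕ} {P Q : Matrix (Fin 2) (Fin 2) ℂ}
    (hP : IsProd A m P) (hQ : IsProd A n Q) :
    ∃ k R, IsProd A k R ∧ (k = m + n ∨ k = m + n + 1) ∧
      kappa A * (opNormC Q * opNormC P) ≤ opNormC R := by
  set p := opNormC P with hp
  set q := opNormC Q with hq
  rcases eq_or_lt_of_le (opNormC_nonneg P) with hp0 | hppos
  · exact ⟨m + n, Q * P, isProd_mul A hP hQ, Or.inl rfl, by
      rw [show p = 0 from hp.trans hp0.symm, mul_zero, mul_zero]; exact opNormC_nonneg _⟩
  rcases eq_or_lt_of_le (opNormC_nonneg Q) with hq0 | hqpos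
  · exact ⟨m + n, Q * P, isProd_mul A hP hQ, Or.inl rfl, by
      rw [show q = 0 from hq.trans hq0.symm, zero_mul, mul_zero]; exact opNormC_nonneg _⟩
  obtain ⟨x, hx1, hxmax⟩ := exists_max_vec (Tcl P)
  obtain ⟨y, hy1, hymax⟩ := exists_max_vec (ContinuousLinearMap.adjoint (Tcl Q))
  have hadj : ‖ContinuousLinearMap.adjoint (Tcl Q)‖ = ‖Tcl Q‖ :=
    LinearIsometryEquiv.norm_map ContinuousLinearMap.adjoint (Tcl Q)
  rw [hadj] at hymax
  set a : E2 := ((p : ℂ))⁻¹ • (Tcl P x) with ha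
  set b : E2 := ((q : ℂ))⁻¹ • (ContinuousLinearMap.adjoint (Tcl Q) y) with hb
  have hpne : (p : ℂ) ≠ 0 := by
    simp only [ne_eq, Complex.ofReal_eq_zero]
    exact ne_of_gt hppos
  have hqne : (q : ℂ) ≠ 0 := by
    simp only [ne_eq, Complex.ofReal_eq_zero]
    exact ne_of_gt hqpos
  have haP : Tcl P x = (p : ℂ) • a := by
    rw [ha, smul_smul, mul_inv_cancel₀ hpne, one_smul]
  have hbQ : ContinuousLinearMap.adjoint (Tcl Q) y = (q : ℂ) • b := by
    rw [hb, smul_smul, mul_inv_cancel₀ hqne, one_smul]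
  have ha1 : ‖a‖ = 1 := by
    rw [ha, norm_smul, hxmax, ← opNormC_eq, ← hp]
    simp [abs_of_pos (show (0:ℝ) < p from hppos), inv_mul_cancel₀ (ne_of_gt (show (0:ℝ) < p from hppos))]
  have hb1 : ‖b‖ = 1 := by
    rw [hb, norm_smul, hymax, ← opNormC_eq, ← hq]
    simp [abs_of_pos (show (0:ℝ) < q from hqpos), inv_mul_cancel₀ (ne_of_gt (show (0:ℝ) < q from hqpos))]
  have hκle : kappa A ≤ maxInner A a b := kappa_le A a b ha1 hb1
  obtain ⟨i, hi⟩ := exists_eq_ciSup_of_finite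
    (f := fun i : Option (Fin N) => ‖(inner ℂ (Matrix.toEuclideanLin (i.elim 1 A) a) b : ℂ)‖)
  have hκi : kappa A ≤ ‖(inner ℂ (Matrix.toEuclideanLin (i.elim 1 A) a) b : ℂ)‖ := by
    rw [hi]; exact hκle
  set X := i.elim 1 A with hX
  have hmain : kappa A * (opNormC Q * opNormC P) ≤ opNormC (Q * X * P) := by
    have hRapp : Tcl (Q * X * P) x = Tcl Q (Tcl X (Tcl P x)) := by
      rw [Tcl_mul, Tcl_mul]; rfl
    have hinner : (inner ℂ (Tcl (Q * X * P) x) y : ℂ)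
        = (starRingEnd ℂ) (p : ℂ) * ((q : ℂ) * (inner ℂ (Tcl X a) b : ℂ)) := by
      rw [hRapp, ← ContinuousLinearMap.adjoint_inner_right, haP, hbQ, _root_.map_smul,
        inner_smul_left, inner_smul_right]
    have hnorm : ‖(inner ℂ (Tcl (Q * X * P) x) y : ℂ)‖
        = p * (q * ‖(inner ℂ (Tcl X a) b : ℂ)‖) := by
      rw [hinner, norm_mul, norm_mul, RCLike.norm_conj]
      simp [abs_of_pos (show (0:ℝ) < p from hppos), abs_of_pos (show (0:ℝ) < q from hqpos)]
    have hTX : (Tcl X a) = Matrix.toEuclideanLin X a := rfl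
    have hge : kappa A * (q * p) ≤ ‖(inner ℂ (Tcl (Q * X * P) x) y : ℂ)‖ := by
      rw [hnorm, hTX]
      calc kappa A * (q * p) ≤ ‖(inner ℂ (Matrix.toEuclideanLin X a) b : ℂ)‖ * (q * p) :=
            mul_le_mul_of_nonneg_right hκi (by positivity)
        _ = p * (q * ‖(inner ℂ (Matrix.toEuclideanLin X a) b : ℂ)‖) := by ring
    have hle : ‖(inner ℂ (Tcl (Q * X * P) x) y : ℂ)‖ ≤ opNormC (Q * X * P) := by
      calc ‖(inner ℂ (Tcl (Q * X * P) x) y : ℂ)‖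
          ≤ ‖Tcl (Q * X * P) x‖ * ‖y‖ := norm_inner_le_norm _ _
        _ = ‖Tcl (Q * X * P) x‖ := by rw [hy1, mul_one]
        _ ≤ ‖Tcl (Q * X * P)‖ * ‖x‖ := (Tcl (Q * X * P)).le_opNorm x
        _ = opNormC (Q * X * P) := by rw [hx1, mul_one, opNormC_eq]
    exact le_trans hge hle
  clear_value X
  cases i with
  | none =>
    have hX1 : X = 1 := hX
    refine ⟨m + n, Q * X * P, ?_, Or.inl rfl, hmain⟩
    have : Q * X * P = Q * P := by rw [hX1]; simp
    rw [this]
    exact isProd_mul A hP hQ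
  | some j =>
    have hXj : X = A j := hX
    refine ⟨(m + 1) + n, Q * X * P, ?_, Or.inr (by omega), hmain⟩
    have : Q * X * P = Q * (A j * P) := by rw [hXj, mul_assoc]
    rw [this]
    exact isProd_mul A (isProd_cons A j hP) hQ


lemma growth {N : ℕ} (A : Fin N → Matrix (Fin 2) (Fin 2) ℂ) (hκ : 0 < kappa A)
    {n : ℕ} (hn : 1 ≤ n) {P0 : Matrix (Fin 2) (Fin 2) ℂ} (hP0 : IsProd A n P0)
    (hc1 : 1 < kappa A * opNormC P0) (j : ℕ) :
    ∃ k P, IsProd A k P ∧ n * 2 ^ j ≤ k ∧ k + 1 ≤ (n + 1) * 2 ^ j ∧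
      (kappa A * opNormC P0) ^ (2 ^ j) ≤ kappa A * opNormC P := by
  set c := opNormC P0 with hc
  induction j with
  | zero =>
    exact ⟨n, P0, hP0, by simp, by simp, by rw [pow_zero, pow_one]⟩
  | succ j ih =>
    obtain ⟨k, P, hkP, hlow, hhigh, hpow⟩ := ih
    obtain ⟨k', R, hR, hk', hineq⟩ := combine A hκ hkP hkP
    refine ⟨k', R, hR, ?_, ?_, ?_⟩
    · have e : n * 2 ^ (j + 1) = n * 2 ^ j + n * 2 ^ j := by ring
      rcases hk' with rfl | rfl <;> omega
    · have e : (n + 1) * 2 ^ (j + 1) = (n + 1) * 2 ^ j + (n + 1) * 2 ^ j := by ring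
      rcases hk' with rfl | rfl <;> omega
    · have hcp0 : (0:ℝ) ≤ (kappa A * c) ^ (2 ^ j) :=
        pow_nonneg (le_of_lt (lt_trans zero_lt_one hc1)) _
      have hsq : ((kappa A * c) ^ (2 ^ j)) ^ 2 ≤ (kappa A * opNormC P) ^ 2 :=
        pow_le_pow_left₀ hcp0 hpow 2
      have h2 : (kappa A * opNormC P) ^ 2 ≤ kappa A * opNormC R := by
        have h3 : kappa A * (kappa A * (opNormC P * opNormC P)) ≤ kappa A * opNormC R :=
          mul_le_mul_of_nonneg_left hineq (le_of_lt hκ)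
        calc (kappa A * opNormC P) ^ 2 = kappa A * (kappa A * (opNormC P * opNormC P)) := by ring
          _ ≤ kappa A * opNormC R := h3
      calc (kappa A * c) ^ (2 ^ (j + 1)) = ((kappa A * c) ^ (2 ^ j)) ^ 2 := by
            rw [← pow_mul]; ring_nf
        _ ≤ (kappa A * opNormC P) ^ 2 := hsq
        _ ≤ kappa A * opNormC R := h2

theorem stmt5 {N : ℕ} (hN : 0 < N) (A : Fin N → Matrix (Fin 2) (Fin 2) ℂ)
    (h : ¬ HasCommonEigenvector A)
    (hjsr : Filter.Tendsto (fun n : ℕ => wordSup A n ^ ((1 : ℝ) / n)) Filter.atTop (nhds 1)) :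
    0 < kappa A ∧ ∀ n : ℕ, 1 ≤ n → wordSup A n ≤ (kappa A)⁻¹ * ⨆ j, opNormC (A j) := by
  have hκ : 0 < kappa A := kappa_pos A h
  refine ⟨hκ, ?_⟩
  set M := ⨆ j, opNormC (A j) with hM
  have hM0 : 0 ≤ M := opNormSup_nonneg A hN
  have hM1 : 1 ≤ M := by
    by_contra hlt
    push_neg at hlt
    have hev : ∀ᶠ n : ℕ in Filter.atTop, wordSup A n ^ ((1:ℝ)/n) ≤ M := by
      filter_upwards [Filter.eventually_ge_atTop 1] with n hn1
      have h1 : wordSup A n ≤ M ^ n := wordSup_le_pow A hN n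
      have h2 : wordSup A n ^ ((1:ℝ)/n) ≤ (M ^ n) ^ ((1:ℝ)/n) :=
        Real.rpow_le_rpow (wordSup_nonneg A hN n) h1 (by positivity)
      have hnne : (n : ℝ) ≠ 0 := by
        exact_mod_cast Nat.one_le_iff_ne_zero.mp hn1
      have h3 : ((M:ℝ) ^ n) ^ ((1:ℝ)/n) = M := by
        rw [← Real.rpow_natCast M n, ← Real.rpow_mul hM0, mul_one_div, div_self hnne,
          Real.rpow_one]
      rw [h3] at h2
      exact h2
    have := le_of_tendsto hjsr hev
    linarith
  intro n hn
  by_contra hgt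
  push_neg at hgt
  have : Nonempty (Fin N) := Fin.pos_iff_nonempty.mp hN
  obtain ⟨σ, hσ⟩ := exists_lt_of_lt_ciSup hgt
  set P0 := prodW A σ n with hP0def
  have hP0 : IsProd A n P0 := ⟨σ, rfl⟩
  have hMlt : M < kappa A * opNormC P0 := by
    have h4 := mul_lt_mul_of_pos_left hσ hκ
    rwa [← mul_assoc, mul_inv_cancel₀ (ne_of_gt hκ), one_mul] at h4
  have hc1 : 1 < kappa A * opNormC P0 := lt_of_le_of_lt hM1 hMlt
  choose k P hkP hlow hhigh hpow using growth A hκ hn hP0 hc1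
  have hkge : ∀ j, 2 ^ j ≤ k j := fun j =>
    le_trans (Nat.le_mul_of_pos_left _ hn) (hlow j)
  have hk_top : Filter.Tendsto k Filter.atTop Filter.atTop :=
    Filter.tendsto_atTop_mono hkge (tendsto_pow_atTop_atTop_of_one_lt one_lt_two)
  have hkpos : ∀ j, 0 < k j := fun j => lt_of_lt_of_le (Nat.two_pow_pos j) (hkge j)
  have hklim : Filter.Tendsto (fun j => wordSup A (k j) ^ ((1:ℝ)/(k j)))
      Filter.atTop (nhds 1) := hjsr.comp hk_top
  set κc := kappa A * opNormC P0 with hκc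
  have hκc0 : (0:ℝ) ≤ κc := le_of_lt (lt_trans zero_lt_one hc1)
  set b := κc ^ ((1:ℝ)/(n+1)) with hbdef
  have hκinv0 : (0:ℝ) ≤ (kappa A)⁻¹ := le_of_lt (inv_pos.mpr hκ)
  have hlb : ∀ j, (kappa A)⁻¹ ^ ((1:ℝ)/(k j)) * b ≤ wordSup A (k j) ^ ((1:ℝ)/(k j)) := by
    intro j
    have hkjne : ((k j : ℝ)) ≠ 0 := by
      exact_mod_cast Nat.pos_iff_ne_zero.mp (hkpos j)
    have he0 : (0:ℝ) ≤ (1:ℝ)/(k j) := by positivity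
    -- opNormC (P j) ≥ κ⁻¹ * κc ^ (2^j)
    have h5 : (kappa A)⁻¹ * κc ^ (2 ^ j) ≤ opNormC (P j) := by
      have h6 := hpow j
      calc (kappa A)⁻¹ * κc ^ (2 ^ j) ≤ (kappa A)⁻¹ * (kappa A * opNormC (P j)) :=
            mul_le_mul_of_nonneg_left h6 hκinv0
        _ = opNormC (P j) := by
            rw [← mul_assoc, inv_mul_cancel₀ (ne_of_gt hκ), one_mul]
    have h7 : (kappa A)⁻¹ * κc ^ (2 ^ j) ≤ wordSup A (k j) :=
      le_trans h5 (le_wordSup A hN (hkP j))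
    have h8 : ((kappa A)⁻¹ * κc ^ (2 ^ j)) ^ ((1:ℝ)/(k j))
        ≤ wordSup A (k j) ^ ((1:ℝ)/(k j)) :=
      Real.rpow_le_rpow (by positivity) h7 he0
    refine le_trans ?_ h8
    rw [Real.mul_rpow hκinv0 (by positivity)]
    apply mul_le_mul_of_nonneg_left _ (Real.rpow_nonneg hκinv0 _)
    -- (κc ^ 2^j) ^ (1/k j) ≥ b
    rw [← Real.rpow_natCast κc (2 ^ j), ← Real.rpow_mul hκc0]
    rw [hbdef]
    apply Real.rpow_le_rpow_of_exponent_le (le_of_lt hc1)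
    rw [mul_one_div]
    rw [div_le_div_iff₀ (by positivity) (by exact_mod_cast hkpos j)]
    have h9 : (k j : ℝ) ≤ (n + 1) * 2 ^ j := by
      have := hhigh j
      have : (k j : ℝ) ≤ ((n + 1) * 2 ^ j : ℕ) := by exact_mod_cast Nat.le_of_succ_le this
      calc (k j : ℝ) ≤ ((n + 1) * 2 ^ j : ℕ) := this
        _ = (n + 1) * 2 ^ j := by push_cast; ring
    calc 1 * (k j : ℝ) = k j := one_mul _
      _ ≤ (n + 1) * 2 ^ j := h9
      _ = ((2 ^ j : ℕ) : ℝ) * ((n:ℝ) + 1) := by push_cast; ring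
  have hulim : Filter.Tendsto (fun j => (kappa A)⁻¹ ^ ((1:ℝ)/(k j)) * b)
      Filter.atTop (nhds b) := by
    have hexp : Filter.Tendsto (fun j => (1:ℝ)/(k j)) Filter.atTop (nhds 0) := by
      simp only [one_div]
      exact Filter.Tendsto.comp tendsto_inv_atTop_zero
        (Filter.Tendsto.comp tendsto_natCast_atTop_atTop hk_top)
    have hcont : Filter.Tendsto (fun j => (kappa A)⁻¹ ^ ((1:ℝ)/(k j)))
        Filter.atTop (nhds 1) := by
      have hca : ContinuousAt (fun t : ℝ => (kappa A)⁻¹ ^ t) 0 :=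
        Real.continuousAt_const_rpow (by positivity)
      have := hca.tendsto.comp hexp
      rwa [Real.rpow_zero] at this
    have := hcont.mul_const b
    rwa [one_mul] at this
  have hble : b ≤ 1 := le_of_tendsto_of_tendsto' hulim hklim hlb
  have hb1 : 1 < b := by
    rw [hbdef]
    rw [Real.one_lt_rpow_iff_of_pos (lt_trans zero_lt_one hc1)]
    exact Or.inl ⟨hc1, by positivity⟩
  linarith
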